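/- Let M ≥ 1, 0 < p < 2M/(2M+1), λ̄ = ln((1−p)/(p/(2M))), γ > 0 fixed, and for i = 1,…,M−1 set γ^{(i)} = √(λ̄/((2(M−i+1)−1)(2(M−i+1)−3))). Then the function ρ(γ) of Theorem 1 is continuous at each γ^{(i)}, i.e., the values obtained with index j = M−i+1 (left limit) and j = M−i (right limit) agree at γ = γ^{(i)}. -/

import Mathlib

noncomputable def erf (z : ℝ) : ℝ :=
  (2 / Real.sqrt Real.pi) * ∫ t in (0:ℝ)..z, Real.exp (-t ^ 2)

lemma erf_neg (x : ℝ) : erf (-x) = - erf x := by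
  unfold erf
  have h : (∫ t in (0:ℝ)..(-x), Real.exp (-t ^ 2))
      = - ∫ t in (0:ℝ)..x, Real.exp (-t ^ 2) := by
    have := intervalIntegral.integral_comp_neg (a := (0:ℝ)) (b := x)
      (f := fun t => Real.exp (-t ^ 2))
    simp only [neg_neg, neg_zero] at this
    rw [intervalIntegral.integral_symm]
    rw [← this]
    congr 1
    apply intervalIntegral.integral_congr
    intro t _
    ring_nf
  rw [h]; ring

theorem stmt_10 (M : ℕ) (hM : 1 ≤ M) (p : ℝ) (hp : 0 < p)
    (hplt : p < 2 * M / (2 * M + 1))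
    (lamb : ℝ) (hlamb : lamb = Real.log ((1 - p) / (p / (2 * M))))
    (ρ : ℕ → ℝ → ℝ)
    (hρ : ∀ (j : ℕ) (γ : ℝ), ρ j γ =
      p / (2 * M) + (((M : ℝ) - (j : ℝ)) / M) * p * erf γ
        - (p / (2 * M)) * erf (lamb / (2 * (2 * (j : ℝ) - 1) * γ) - (2 * (j : ℝ) - 1) * γ / 2)
        + (1 - p) * erf (lamb / (2 * (2 * (j : ℝ) - 1) * γ) + (2 * (j : ℝ) - 1) * γ / 2))
    (γi : ℕ → ℝ)
    (hγi : ∀ i : ℕ, γi i =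
      Real.sqrt (lamb / ((2 * ((M : ℝ) - i + 1) - 1) * (2 * ((M : ℝ) - i + 1) - 3)))) :
    ∀ i : ℕ, 1 ≤ i → i ≤ M - 1 → ρ (M - i + 1) (γi i) = ρ (M - i) (γi i) := by
  intro i hi1 hi2
  have hM2 : 2 ≤ M := by omega
  have hiM : i ≤ M := by omega
  have hMpos : (0:ℝ) < M := by exact_mod_cast (by omega : 0 < M)
  -- real quantities
  set r : ℝ := (M : ℝ) - i with hr
  have hr1 : 1 ≤ r := by
    have : (i : ℝ) ≤ (M : ℝ) - 1 := by
      have : (i:ℝ) + 1 ≤ M := by exact_mod_cast Nat.add_le_of_le_sub hM hi2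
      linarith
    simp [hr]; linarith
  have hc1 : ((M - i + 1 : ℕ) : ℝ) = r + 1 := by
    push_cast [hiM]; ring
  have hc0 : ((M - i : ℕ) : ℝ) = r := by
    push_cast [hiM]; ring
  -- lamb > 0
  have hplt' : p / (2 * M) < 1 - p := by
    have h2M : (0:ℝ) < 2 * M := by positivity
    rw [div_lt_iff₀ h2M]
    have := (lt_div_iff₀ (by positivity : (0:ℝ) < 2 * M + 1)).mp hplt
    nlinarith
  have hpd : 0 < p / (2 * M) := by positivity
  have hlpos : 0 < lamb := by
    rw [hlamb]
    apply Real.log_pos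
    rw [lt_div_iff₀ hpd]
    linarith
  set a : ℝ := 2 * r + 1 with ha
  set b : ℝ := 2 * r - 1 with hb
  have hbpos : 0 < b := by simp [hb]; linarith
  have hapos : 0 < a := by simp [ha]; linarith
  set γ : ℝ := γi i with hγ
  have hγval : γ = Real.sqrt (lamb / (a * b)) := by
    rw [hγ, hγi i]
    congr 2
    simp [ha, hb, hr]; ring
  have hγpos : 0 < γ := by
    rw [hγval]
    apply Real.sqrt_pos.mpr
    positivity
  have hγsq : γ ^ 2 = lamb / (a * b) := by
    rw [hγval, Real.sq_sqrt (by positivity)]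
  have hlab : lamb = γ ^ 2 * (a * b) := by
    rw [hγsq]; field_simp
  have hane : a ≠ 0 := ne_of_gt hapos
  have hbne : b ≠ 0 := ne_of_gt hbpos
  have hγne : γ ≠ 0 := ne_of_gt hγpos
  have key1 : lamb / (2 * (2 * (r + 1) - 1) * γ) - (2 * (r + 1) - 1) * γ / 2 = -γ := by
    have : 2 * (r + 1) - 1 = a := by rw [ha]; ring
    rw [this, hlab]
    field_simp
    ring_nf
    linarith
  have key2 : lamb / (2 * (2 * r - 1) * γ) - (2 * r - 1) * γ / 2 = γ := by
    rw [← hb, hlab]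
    field_simp
    ring_nf
    linarith
  have key3 : lamb / (2 * (2 * (r + 1) - 1) * γ) + (2 * (r + 1) - 1) * γ / 2
      = lamb / (2 * (2 * r - 1) * γ) + (2 * r - 1) * γ / 2 := by
    have h1 : 2 * (r + 1) - 1 = a := by rw [ha]; ring
    rw [h1, ← hb, hlab]
    field_simp
    ring
  rw [hρ, hρ, hc1, hc0, key1, key2, key3, erf_neg]
  have : (M:ℝ) ≠ 0 := ne_of_gt hMpos
  field_simp
  ring
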